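/- There is no natural number k, row-stochastic matrix T ∈ ℝ^{k×k}, and vectors m, μ ∈ ℝ^k such that mᵀ T^{n-1} μ = n for all n ≥ 1. -/
import Mathlib


open Matrix in
theorem no_stochastic_linear_growth :
    ¬ ∃ (k : ℕ) (T : Matrix (Fin k) (Fin k) ℝ) (m μ : Fin k → ℝ),
      (∀ i j, 0 ≤ T i j) ∧ (∀ i, ∑ j, T i j = 1) ∧
      ∀ n : ℕ, 1 ≤ n → m ⬝ᵥ (T ^ (n - 1)).mulVec μ = (n : ℝ) := by
  rintro ⟨k, T, m, μ, hpos, hrow, hval⟩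
  -- powers of T are row-stochastic
  have hpow : ∀ n : ℕ, (∀ i j, 0 ≤ (T ^ n) i j) ∧ (∀ i, ∑ j, (T ^ n) i j = 1) := by
    intro n
    induction n with
    | zero =>
      constructor
      · intro i j
        simp [Matrix.one_apply]
        positivity
      · intro i
        simp [Matrix.one_apply]
    | succ n ih =>
      obtain ⟨ih1, ih2⟩ := ih
      constructor
      · intro i j
        rw [pow_succ, Matrix.mul_apply]
        exact Finset.sum_nonneg fun l _ => mul_nonneg (ih1 i l) (hpos l j)
      · intro i
        rw [pow_succ]
        simp only [Matrix.mul_apply]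
        rw [Finset.sum_comm]
        calc ∑ l, ∑ j, (T ^ n) i l * T l j
            = ∑ l, (T ^ n) i l * ∑ j, T l j := by
              simp [Finset.mul_sum]
          _ = 1 := by simp only [hrow, mul_one]; exact ih2 i
  -- entries of powers are ≤ 1
  have hle1 : ∀ n : ℕ, ∀ i j, (T ^ n) i j ≤ 1 := by
    intro n i j
    obtain ⟨h1, h2⟩ := hpow n
    calc (T ^ n) i j ≤ ∑ l, (T ^ n) i l :=
          Finset.single_le_sum (fun l _ => h1 i l) (Finset.mem_univ j)
      _ = 1 := h2 i
  set C : ℝ := (∑ i, |m i|) * (∑ j, |μ j|) with hC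
  have hbound : ∀ n : ℕ, |m ⬝ᵥ (T ^ n).mulVec μ| ≤ C := by
    intro n
    obtain ⟨h1, _⟩ := hpow n
    calc |m ⬝ᵥ (T ^ n).mulVec μ|
        ≤ ∑ i, |m i * (T ^ n).mulVec μ i| := Finset.abs_sum_le_sum_abs _ _
      _ ≤ ∑ i, |m i| * (∑ j, |μ j|) := by
          apply Finset.sum_le_sum
          intro i _
          rw [abs_mul]
          apply mul_le_mul_of_nonneg_left _ (abs_nonneg _)
          simp only [Matrix.mulVec, dotProduct]
          calc |∑ j, (T ^ n) i j * μ j|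
              ≤ ∑ j, |(T ^ n) i j * μ j| := Finset.abs_sum_le_sum_abs _ _
            _ ≤ ∑ j, |μ j| := by
                apply Finset.sum_le_sum
                intro j _
                rw [abs_mul, abs_of_nonneg (h1 i j)]
                calc (T ^ n) i j * |μ j| ≤ 1 * |μ j| :=
                      mul_le_mul_of_nonneg_right (hle1 n i j) (abs_nonneg _)
                  _ = |μ j| := one_mul _
      _ = C := by rw [hC, Finset.sum_mul]
  set N : ℕ := ⌈C⌉₊ + 1 with hN
  have h1 : (1 : ℕ) ≤ N := by omega
  have := hval N h1
  have hCN : C < (N : ℝ) := by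
    calc C ≤ (⌈C⌉₊ : ℝ) := Nat.le_ceil C
      _ < (N : ℝ) := by exact_mod_cast Nat.lt_succ_self _
  have := hbound (N - 1)
  rw [hval N h1] at this
  have : (N : ℝ) ≤ C := (abs_le.mp this).2
  linarith
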